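/- Let σ > 0, R > 0, K > 0, C₁ > 0, and let φ : ℝ² → ℝ be of class C⁴ with all iterated derivatives of order up to 4 bounded by K. Let e¹ = (1,0), e² = (−1,0), e³ = (0,1), e⁴ = (0,−1). Then there exists a constant C > 0 (depending only on K, σ, R, C₁) such that for every h > 0, every function g : ℝ² → ℝ with sup_{y ∈ ℝ²} |g(y) − φ(y)| ≤ C₁·h², every x ∈ ℝ², every q ∈ ℝ² with |q| ≤ R, and every Δt ∈ (0,1]: (1/Δt)·|(1/4)·∑_{ℓ=1}^{4} g(x + Δt·q + √(2Δt)·σ·e^ℓ) − φ(x) − Δt·((σ²/2)·Δφ(x) + q·∇φ(x))| ≤ C·(Δt + h²/Δt). -/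

import Mathlib

open Set

/-- Derivative of an iterated derivative of `φ` along a line, applied to fixed vectors. -/
private lemma hasDerivAt_iteratedFDeriv_line {φ : ℝ × ℝ → ℝ} (hφ : ContDiff ℝ 4 φ)
    {k : ℕ} (hk : k < 4) (c w : ℝ × ℝ) (m : Fin k → ℝ × ℝ) (t : ℝ) :
    HasDerivAt (fun s : ℝ => iteratedFDeriv ℝ k φ (c + s • w) m)
      (iteratedFDeriv ℝ (k + 1) φ (c + t • w) (Fin.cons w m)) t := by
  have hline : HasDerivAt (fun s : ℝ => c + s • w) w t := by
    simpa using ((hasDerivAt_id t).smul_const w).const_add c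
  have hdiff : DifferentiableAt ℝ (iteratedFDeriv ℝ k φ) (c + t • w) :=
    (hφ.differentiable_iteratedFDeriv (by exact_mod_cast hk)) _
  have h1 : HasDerivAt (fun s : ℝ => iteratedFDeriv ℝ k φ (c + s • w))
      (fderiv ℝ (iteratedFDeriv ℝ k φ) (c + t • w) w) t :=
    hdiff.hasFDerivAt.comp_hasDerivAt t hline
  have h2 := ((ContinuousMultilinearMap.apply ℝ (fun _ : Fin k => ℝ × ℝ) ℝ m).hasFDerivAt).comp_hasDerivAt t h1
  rw [iteratedFDeriv_succ_apply_left, Fin.cons_zero, Fin.tail_cons]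
  exact h2

/-- Iterated (one-dimensional) derivatives of `φ` along a line. -/
private lemma iteratedDeriv_line {φ : ℝ × ℝ → ℝ} (hφ : ContDiff ℝ 4 φ)
    {k : ℕ} (hk : k ≤ 4) (c w : ℝ × ℝ) (t : ℝ) :
    iteratedDeriv k (fun s : ℝ => φ (c + s • w)) t
      = iteratedFDeriv ℝ k φ (c + t • w) (fun _ => w) := by
  induction k generalizing t with
  | zero => simp
  | succ k ih =>
    rw [iteratedDeriv_succ]
    have hk4 : k < 4 := by omega
    have heq : iteratedDeriv k (fun s : ℝ => φ (c + s • w))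
        = fun s => iteratedFDeriv ℝ k φ (c + s • w) (fun _ => w) :=
      funext fun s => ih (by omega) s
    rw [heq, (hasDerivAt_iteratedFDeriv_line hφ hk4 c w (fun _ => w) t).deriv]
    congr 1
    exact Fin.cons_self_tail (fun _ : Fin (k + 1) => w)

/-- For globally `C^N` functions, `iteratedDerivWithin` agrees with `iteratedDeriv` on
sets of unique differentiability. -/
private lemma iteratedDerivWithin_eq_iteratedDeriv' {f : ℝ → ℝ} {N : ℕ} (hf : ContDiff ℝ (N : ℕ∞) f)
    {n : ℕ} (hn : n ≤ N) {s : Set ℝ} (hs : UniqueDiffOn ℝ s) {x : ℝ} (hx : x ∈ s) :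
    iteratedDerivWithin n f s x = iteratedDeriv n f x := by
  have h1 : HasFTaylorSeriesUpToOn (N : ℕ∞) f (ftaylorSeries ℝ f) s := by
    have := (hf.contDiffOn (s := univ)).ftaylorSeriesWithin uniqueDiffOn_univ
    rw [ftaylorSeriesWithin_univ] at this
    exact this.mono (subset_univ s)
  have h2 := h1.eq_iteratedFDerivWithin_of_uniqueDiffOn (m := n) (by exact_mod_cast hn) hs hx
  rw [iteratedDerivWithin_eq_iteratedFDerivWithin, iteratedDeriv_eq_iteratedFDeriv, ← h2]
  rfl

/-- Taylor estimate for `φ` along a line segment. -/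
private lemma taylor_line {φ : ℝ × ℝ → ℝ} {K : ℝ} (hφ : ContDiff ℝ 4 φ)
    (hbd : ∀ k : ℕ, k ≤ 4 → ∀ x : ℝ × ℝ, ‖iteratedFDeriv ℝ k φ x‖ ≤ K)
    {n : ℕ} (hn : n < 4) (c w : ℝ × ℝ) {b : ℝ} (hb : 0 < b) :
    |φ (c + b • w) - ∑ k ∈ Finset.range (n + 1),
        ((k.factorial : ℝ)⁻¹ * b ^ k) * iteratedFDeriv ℝ k φ c (fun _ => w)|
      ≤ K * ‖w‖ ^ (n + 1) * b ^ (n + 1) := by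
  set ψ : ℝ → ℝ := fun t => φ (c + t • w) with hψdef
  have hline : ContDiff ℝ 4 (fun t : ℝ => c + t • w) :=
    contDiff_const.add (contDiff_id.smul contDiff_const)
  have hψ : ContDiff ℝ 4 ψ := hφ.comp hline
  have hψ' : ContDiff ℝ ((4 : ℕ) : ℕ∞) ψ := by exact_mod_cast hψ
  have hub : UniqueDiffOn ℝ (Icc 0 b) := uniqueDiffOn_Icc hb
  have hKw : (0:ℝ) ≤ K * ‖w‖ ^ (n + 1) := by
    have hK0 : (0:ℝ) ≤ K := le_trans (norm_nonneg _) (hbd 0 (by omega) c)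
    positivity
  have hbound : ∀ y ∈ Icc (0:ℝ) b, ‖iteratedDerivWithin (n + 1) ψ (Icc 0 b) y‖
      ≤ K * ‖w‖ ^ (n + 1) := by
    intro y hy
    rw [iteratedDerivWithin_eq_iteratedDeriv' hψ' (by omega) hub hy,
      iteratedDeriv_line hφ (by omega) c w y]
    calc ‖iteratedFDeriv ℝ (n+1) φ (c + y • w) (fun _ => w)‖
        ≤ ‖iteratedFDeriv ℝ (n+1) φ (c + y • w)‖ * ∏ _i : Fin (n+1), ‖w‖ :=
          ContinuousMultilinearMap.le_opNorm _ _
      _ ≤ K * ‖w‖ ^ (n + 1) := by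
          rw [Finset.prod_const, Finset.card_univ, Fintype.card_fin]
          exact mul_le_mul_of_nonneg_right (hbd _ (by omega) _) (by positivity)
  have key := taylor_mean_remainder_bound (f := ψ) (a := 0) (b := b) (x := b) (n := n) hb.le
    (hψ.contDiffOn.of_le (by exact_mod_cast Nat.cast_le.mpr (by omega : n + 1 ≤ 4))) (right_mem_Icc.2 hb.le) hbound
  have hTW : taylorWithinEval ψ n (Icc 0 b) 0 b
      = ∑ k ∈ Finset.range (n + 1),
        ((k.factorial : ℝ)⁻¹ * b ^ k) * iteratedFDeriv ℝ k φ c (fun _ => w) := by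
    rw [taylor_within_apply]
    refine Finset.sum_congr rfl fun k hk => ?_
    have hk4 : k ≤ 4 := by simp only [Finset.mem_range] at hk; omega
    rw [iteratedDerivWithin_eq_iteratedDeriv' hψ' hk4 hub (left_mem_Icc.2 hb.le),
      iteratedDeriv_line hφ hk4 c w 0]
    simp [smul_eq_mul]
  have hrem : K * ‖w‖ ^ (n + 1) * (b - 0) ^ (n + 1) / n.factorial
      ≤ K * ‖w‖ ^ (n + 1) * b ^ (n + 1) := by
    rw [sub_zero]
    have h1 : (1:ℝ) ≤ n.factorial := by exact_mod_cast n.factorial_pos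
    exact div_le_self (mul_nonneg hKw (pow_nonneg hb.le _)) h1
  rw [hTW] at key
  calc |φ (c + b • w) - ∑ k ∈ Finset.range (n + 1),
        ((k.factorial : ℝ)⁻¹ * b ^ k) * iteratedFDeriv ℝ k φ c (fun _ => w)|
      = ‖ψ b - ∑ k ∈ Finset.range (n + 1),
        ((k.factorial : ℝ)⁻¹ * b ^ k) * iteratedFDeriv ℝ k φ c (fun _ => w)‖ := rfl
    _ ≤ K * ‖w‖ ^ (n + 1) * (b - 0) ^ (n + 1) / n.factorial := key
    _ ≤ K * ‖w‖ ^ (n + 1) * b ^ (n + 1) := hrem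

/-- Scaling identity for iterated derivatives applied to a repeated vector. -/
private lemma iteratedFDeriv_smul_diag {φ : ℝ × ℝ → ℝ} (k : ℕ) (z : ℝ × ℝ) (r : ℝ) (v : ℝ × ℝ) :
    iteratedFDeriv ℝ k φ z (fun _ => r • v) = r ^ k * iteratedFDeriv ℝ k φ z (fun _ => v) := by
  have := (iteratedFDeriv ℝ k φ z).map_smul_univ (fun _ => r) (fun _ => v)
  rw [this, Finset.prod_const, Finset.card_univ, Fintype.card_fin, smul_eq_mul]

private lemma iteratedFDeriv_neg_diag {φ : ℝ × ℝ → ℝ} (k : ℕ) (z : ℝ × ℝ) (v : ℝ × ℝ) :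
    iteratedFDeriv ℝ k φ z (fun _ => -v) = (-1 : ℝ) ^ k * iteratedFDeriv ℝ k φ z (fun _ => v) := by
  have h : (fun _ : Fin k => -v) = fun _ : Fin k => (-1 : ℝ) • v := by
    funext i; rw [neg_one_smul]
  rw [h, iteratedFDeriv_smul_diag]

/-- The sum of the two cubic Taylor polynomials in directions `w` and `-w`. -/
private lemma pair_sum {φ : ℝ × ℝ → ℝ} (z : ℝ × ℝ) (c : ℝ) (w : ℝ × ℝ) :
    (∑ k ∈ Finset.range 4, ((k.factorial : ℝ)⁻¹ * c ^ k) * iteratedFDeriv ℝ k φ z (fun _ => w))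
    + (∑ k ∈ Finset.range 4, ((k.factorial : ℝ)⁻¹ * c ^ k) * iteratedFDeriv ℝ k φ z (fun _ => -w))
    = 2 * φ z + c ^ 2 * iteratedFDeriv ℝ 2 φ z (fun _ => w) := by
  have h0 : iteratedFDeriv ℝ 0 φ z (fun _ => w) = φ z := iteratedFDeriv_zero_apply _
  simp only [Finset.sum_range_succ, Finset.sum_range_zero,
    iteratedFDeriv_neg_diag, h0]
  norm_num [Nat.factorial]
  ring

/-- Lipschitz estimate for the second derivative. -/
private lemma d2_lipschitz {φ : ℝ × ℝ → ℝ} {K : ℝ} (hφ : ContDiff ℝ 4 φ)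
    (hbd : ∀ k : ℕ, k ≤ 4 → ∀ x : ℝ × ℝ, ‖iteratedFDeriv ℝ k φ x‖ ≤ K)
    (x a : ℝ × ℝ) (m : Fin 2 → ℝ × ℝ) :
    |iteratedFDeriv ℝ 2 φ (x + a) m - iteratedFDeriv ℝ 2 φ x m|
      ≤ K * ‖a‖ * (‖m 0‖ * ‖m 1‖) := by
  have hder : ∀ t ∈ Icc (0:ℝ) 1, HasDerivWithinAt (fun s : ℝ => iteratedFDeriv ℝ 2 φ (x + s • a) m)
      (iteratedFDeriv ℝ 3 φ (x + t • a) (Fin.cons a m)) (Icc 0 1) t := fun t _ =>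
    (hasDerivAt_iteratedFDeriv_line hφ (by omega) x a m t).hasDerivWithinAt
  have hbound : ∀ t ∈ Ico (0:ℝ) 1, ‖iteratedFDeriv ℝ 3 φ (x + t • a) (Fin.cons a m)‖
      ≤ K * ‖a‖ * (‖m 0‖ * ‖m 1‖) := by
    intro t _
    calc ‖iteratedFDeriv ℝ 3 φ (x + t • a) (Fin.cons a m)‖
        ≤ ‖iteratedFDeriv ℝ 3 φ (x + t • a)‖ * ∏ i, ‖(Fin.cons a m : Fin 3 → ℝ × ℝ) i‖ :=
          ContinuousMultilinearMap.le_opNorm _ _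
      _ = ‖iteratedFDeriv ℝ 3 φ (x + t • a)‖ * (‖a‖ * (‖m 0‖ * ‖m 1‖)) := by
          rw [Fin.prod_univ_succ]
          simp [Fin.prod_univ_two]
      _ ≤ K * (‖a‖ * (‖m 0‖ * ‖m 1‖)) := by
          apply mul_le_mul_of_nonneg_right (hbd 3 (by omega) _)
          positivity
      _ = K * ‖a‖ * (‖m 0‖ * ‖m 1‖) := by ring
  have := norm_image_sub_le_of_norm_deriv_le_segment' hder hbound 1 (right_mem_Icc.2 zero_le_one)
  simpa using this


/-- The four unit displacement vectors `e¹ = (1,0)`, `e² = (−1,0)`, `e³ = (0,1)`,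
`e⁴ = (0,−1)` of the four-point semi-Lagrangian quadrature. -/
noncomputable def eVec : Fin 4 → ℝ × ℝ := ![(1, 0), (-1, 0), (0, 1), (0, -1)]

set_option maxHeartbeats 2000000 in
/-- Consistency error estimate of the semi-Lagrangian scheme: if `φ` is `C⁴` with
derivatives of order up to 4 bounded by `K`, and `g` is uniformly within `C₁·h²` of `φ`
(e.g. the piecewise linear interpolant of `φ`), then the scheme's consistency error is
of order `O(Δt + h²/Δt)`. -/
theorem stmt_9 (σ R K C₁ : ℝ) (hσ : 0 < σ) (hR : 0 < R) (hK : 0 < K) (hC₁ : 0 < C₁)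
    (φ : ℝ × ℝ → ℝ) (hφ : ContDiff ℝ 4 φ)
    (hbd : ∀ k : ℕ, k ≤ 4 → ∀ x : ℝ × ℝ, ‖iteratedFDeriv ℝ k φ x‖ ≤ K) :
    ∃ C > 0, ∀ (h : ℝ), 0 < h → ∀ g : ℝ × ℝ → ℝ,
      (∀ y : ℝ × ℝ, |g y - φ y| ≤ C₁ * h ^ 2) →
      ∀ (x q : ℝ × ℝ) (Δt : ℝ), ‖q‖ ≤ R → 0 < Δt → Δt ≤ 1 →
        (1 / Δt) *
            |(1 / 4) * ∑ ℓ : Fin 4, g (x + Δt • q + (Real.sqrt (2 * Δt) * σ) • eVec ℓ)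
              - φ x
              - Δt * ((σ ^ 2 / 2) *
                    (iteratedFDeriv ℝ 2 φ x ![(1, 0), (1, 0)] +
                      iteratedFDeriv ℝ 2 φ x ![(0, 1), (0, 1)]) +
                  fderiv ℝ φ x q)| ≤ C * (Δt + h ^ 2 / Δt) := by
  set B : ℝ := K * (4 * σ ^ 4 + R ^ 2 + σ ^ 2 * R) with hBdef
  have hB : 0 < B := by positivity
  refine ⟨C₁ + B + 1, by positivity, ?_⟩
  intro h hh g hg x q Δt hq hΔt hΔt1
  set C : ℝ := C₁ + B + 1 with hCdef
  set b : ℝ := Real.sqrt (2 * Δt) with hbdef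
  have hb : 0 < b := Real.sqrt_pos.2 (by linarith)
  have hb2 : b ^ 2 = 2 * Δt := Real.sq_sqrt (by linarith)
  set u1 : ℝ × ℝ := ((1 : ℝ), (0 : ℝ)) with hu1def
  set u2 : ℝ × ℝ := ((0 : ℝ), (1 : ℝ)) with hu2def
  set z : ℝ × ℝ := x + Δt • q with hzdef
  set Dq : ℝ := fderiv ℝ φ x q with hDqdef
  set A1 : ℝ := iteratedFDeriv ℝ 2 φ z (fun _ => u1) with hA1def
  set A2 : ℝ := iteratedFDeriv ℝ 2 φ z (fun _ => u2) with hA2def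
  set B1 : ℝ := iteratedFDeriv ℝ 2 φ x (fun _ => u1) with hB1def
  set B2 : ℝ := iteratedFDeriv ℝ 2 φ x (fun _ => u2) with hB2def
  -- identify the second-derivative terms in the goal
  have hm1 : (![(1, 0), (1, 0)] : Fin 2 → ℝ × ℝ) = fun _ => u1 := by
    funext i; fin_cases i <;> rfl
  have hm2 : (![(0, 1), (0, 1)] : Fin 2 → ℝ × ℝ) = fun _ => u2 := by
    funext i; fin_cases i <;> rfl
  rw [hm1, hm2]
  -- the four quadrature points
  have hy : ∀ ℓ : Fin 4, x + Δt • q + (b * σ) • eVec ℓ = z + b • (σ • eVec ℓ) := by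
    intro ℓ; rw [smul_smul, hzdef]
  have he0 : eVec 0 = u1 := rfl
  have he1 : eVec 1 = -u1 := by
    show ((-1 : ℝ), (0 : ℝ)) = -u1
    rw [hu1def, Prod.ext_iff]; norm_num
  have he2 : eVec 2 = u2 := rfl
  have he3 : eVec 3 = -u2 := by
    show ((0 : ℝ), (-1 : ℝ)) = -u2
    rw [hu2def, Prod.ext_iff]; norm_num
  -- Taylor estimates at the four points
  set P : (ℝ × ℝ) → ℝ := fun w => ∑ k ∈ Finset.range 4,
      ((k.factorial : ℝ)⁻¹ * b ^ k) * iteratedFDeriv ℝ k φ z (fun _ => w) with hPdef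
  set E : ℝ := K * σ ^ 4 * (4 * Δt ^ 2) with hEdef
  have hb4 : b ^ 4 = 4 * Δt ^ 2 := by
    have : b ^ 4 = (b ^ 2) ^ 2 := by ring
    rw [this, hb2]; ring
  have hnu1 : ‖u1‖ = 1 := by rw [hu1def]; simp [Prod.norm_def]
  have hnu2 : ‖u2‖ = 1 := by rw [hu2def]; simp [Prod.norm_def]
  have hTay : ∀ w : ℝ × ℝ, ‖w‖ = 1 → |φ (z + b • (σ • w)) - P (σ • w)| ≤ E := by
    intro w hw
    have key := taylor_line hφ hbd (n := 3) (by omega) z (σ • w) hb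
    have hnw : ‖σ • w‖ = σ := by
      rw [norm_smul, hw, Real.norm_eq_abs, abs_of_pos hσ, mul_one]
    rw [hnw] at key
    calc |φ (z + b • (σ • w)) - P (σ • w)| ≤ K * σ ^ (3 + 1) * b ^ (3 + 1) := key
      _ = E := by rw [hEdef, ← hb4]; try ring
  -- sum of the four Taylor polynomials
  have hSP : P (σ • u1) + P (-(σ • u1)) + (P (σ • u2) + P (-(σ • u2)))
      = 4 * φ z + 2 * Δt * σ ^ 2 * (A1 + A2) := by
    have h1 := pair_sum (φ := φ) z b (σ • u1)
    have h2 := pair_sum (φ := φ) z b (σ • u2)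
    rw [iteratedFDeriv_smul_diag 2 z σ u1] at h1
    rw [iteratedFDeriv_smul_diag 2 z σ u2] at h2
    rw [hPdef]
    rw [← hA1def] at h1
    rw [← hA2def] at h2
    rw [h1, h2, hb2]
    ring
  -- sum of φ at the four points
  set Sφ : ℝ := ∑ ℓ : Fin 4, φ (x + Δt • q + (b * σ) • eVec ℓ) with hSφdef
  set Sg : ℝ := ∑ ℓ : Fin 4, g (x + Δt • q + (b * σ) • eVec ℓ) with hSgdef
  have hS : Sφ = φ (z + b • (σ • u1)) + φ (z + b • (-(σ • u1)))
      + (φ (z + b • (σ • u2)) + φ (z + b • (-(σ • u2)))) := by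
    rw [hSφdef, Fin.sum_univ_four, hy 0, hy 1, hy 2, hy 3, he0, he1, he2, he3]
    simp only [smul_neg]
    ring
  have hΦP : |Sφ - (4 * φ z + 2 * Δt * σ ^ 2 * (A1 + A2))| ≤ 4 * E := by
    have hdec : Sφ - (4 * φ z + 2 * Δt * σ ^ 2 * (A1 + A2))
        = (φ (z + b • (σ • u1)) - P (σ • u1)) + (φ (z + b • (-(σ • u1))) - P (-(σ • u1)))
          + ((φ (z + b • (σ • u2)) - P (σ • u2)) + (φ (z + b • (-(σ • u2))) - P (-(σ • u2)))) := by
      rw [hS, ← hSP]; ring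
    rw [hdec]
    have t1 := hTay u1 hnu1
    have t2 := hTay (-u1) (by rw [norm_neg]; exact hnu1)
    have t3 := hTay u2 hnu2
    have t4 := hTay (-u2) (by rw [norm_neg]; exact hnu2)
    rw [smul_neg] at t2 t4
    calc |(φ (z + b • (σ • u1)) - P (σ • u1)) + (φ (z + b • (-(σ • u1))) - P (-(σ • u1)))
          + ((φ (z + b • (σ • u2)) - P (σ • u2)) + (φ (z + b • (-(σ • u2))) - P (-(σ • u2))))|
        ≤ |(φ (z + b • (σ • u1)) - P (σ • u1)) + (φ (z + b • (-(σ • u1))) - P (-(σ • u1)))|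
          + |(φ (z + b • (σ • u2)) - P (σ • u2)) + (φ (z + b • (-(σ • u2))) - P (-(σ • u2)))| :=
          abs_add_le _ _
      _ ≤ (|φ (z + b • (σ • u1)) - P (σ • u1)| + |φ (z + b • (-(σ • u1))) - P (-(σ • u1))|)
          + (|φ (z + b • (σ • u2)) - P (σ • u2)| + |φ (z + b • (-(σ • u2))) - P (-(σ • u2))|) :=
          add_le_add (abs_add_le _ _) (abs_add_le _ _)
      _ ≤ (E + E) + (E + E) := by
          exact add_le_add (add_le_add t1 t2) (add_le_add t3 t4)
      _ = 4 * E := by ring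
  -- first order Taylor at x in direction Δt • q
  have hz1 : |φ z - φ x - Δt * Dq| ≤ K * R ^ 2 * Δt ^ 2 := by
    have key := taylor_line hφ hbd (n := 1) (by omega) x (Δt • q) one_pos
    have hsum : ∑ k ∈ Finset.range 2,
        ((k.factorial : ℝ)⁻¹ * (1:ℝ) ^ k) * iteratedFDeriv ℝ k φ x (fun _ => Δt • q)
        = φ x + Δt * Dq := by
      rw [Finset.sum_range_succ, Finset.sum_range_succ, Finset.sum_range_zero]
      have h0 : iteratedFDeriv ℝ 0 φ x (fun _ => Δt • q) = φ x := iteratedFDeriv_zero_apply _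
      have h1 : iteratedFDeriv ℝ 1 φ x (fun _ => Δt • q) = Δt * Dq := by
        rw [iteratedFDeriv_one_apply]
        show fderiv ℝ φ x (Δt • q) = Δt * Dq
        rw [(fderiv ℝ φ x).map_smul, smul_eq_mul, hDqdef]
      rw [h0, h1]
      norm_num
    rw [hsum] at key
    have harg : x + (1:ℝ) • (Δt • q) = z := by rw [one_smul, hzdef]
    rw [harg] at key
    have hnorm : ‖Δt • q‖ ≤ Δt * R := by
      rw [norm_smul, Real.norm_eq_abs, abs_of_pos hΔt]
      exact mul_le_mul_of_nonneg_left hq hΔt.le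
    calc |φ z - φ x - Δt * Dq| = |φ z - (φ x + Δt * Dq)| := by ring_nf
      _ ≤ K * ‖Δt • q‖ ^ (1 + 1) * 1 ^ (1 + 1) := key
      _ = K * ‖Δt • q‖ ^ 2 := by ring
      _ ≤ K * (Δt * R) ^ 2 := by
          apply mul_le_mul_of_nonneg_left _ hK.le
          exact pow_le_pow_left₀ (norm_nonneg _) hnorm 2
      _ = K * R ^ 2 * Δt ^ 2 := by ring
  -- Lipschitz estimates on the second derivatives
  have hlip : ∀ u : ℝ × ℝ, ‖u‖ = 1 →
      |iteratedFDeriv ℝ 2 φ z (fun _ => u) - iteratedFDeriv ℝ 2 φ x (fun _ => u)|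
        ≤ K * (Δt * R) := by
    intro u hu
    have key := d2_lipschitz hφ hbd x (Δt • q) (fun _ => u)
    rw [hzdef]
    have hnorm : ‖Δt • q‖ ≤ Δt * R := by
      rw [norm_smul, Real.norm_eq_abs, abs_of_pos hΔt]
      exact mul_le_mul_of_nonneg_left hq hΔt.le
    calc |iteratedFDeriv ℝ 2 φ (x + Δt • q) (fun _ => u) - iteratedFDeriv ℝ 2 φ x (fun _ => u)|
        ≤ K * ‖Δt • q‖ * (‖u‖ * ‖u‖) := key
      _ = K * ‖Δt • q‖ := by rw [hu]; ring
      _ ≤ K * (Δt * R) := mul_le_mul_of_nonneg_left hnorm hK.le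
  have hlip1 := hlip u1 hnu1
  have hlip2 := hlip u2 hnu2
  rw [← hA1def, ← hB1def] at hlip1
  rw [← hA2def, ← hB2def] at hlip2
  -- interpolation error
  have hgφ : |Sg - Sφ| ≤ 4 * (C₁ * h ^ 2) := by
    have hdec : Sg - Sφ = ∑ ℓ : Fin 4,
        (g (x + Δt • q + (b * σ) • eVec ℓ) - φ (x + Δt • q + (b * σ) • eVec ℓ)) := by
      rw [hSgdef, hSφdef, Finset.sum_sub_distrib]
    rw [hdec, Fin.sum_univ_four]
    have habs : ∀ p1 p2 p3 p4 : ℝ, |p1 + p2 + p3 + p4| ≤ |p1| + |p2| + |p3| + |p4| := by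
      intro p1 p2 p3 p4
      calc |p1 + p2 + p3 + p4| ≤ |p1 + p2 + p3| + |p4| := abs_add_le _ _
        _ ≤ (|p1 + p2| + |p3|) + |p4| := add_le_add_left (abs_add_le _ _) _
        _ ≤ ((|p1| + |p2|) + |p3|) + |p4| := by
            apply add_le_add_left; apply add_le_add_left; exact abs_add_le _ _
        _ = |p1| + |p2| + |p3| + |p4| := by ring
    refine (habs _ _ _ _).trans ?_
    have h0' := hg (x + Δt • q + (b * σ) • eVec 0)
    have h1' := hg (x + Δt • q + (b * σ) • eVec 1)
    have h2' := hg (x + Δt • q + (b * σ) • eVec 2)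
    have h3' := hg (x + Δt • q + (b * σ) • eVec 3)
    linarith
  -- assemble
  set X : ℝ := (1 / 4) * Sg - φ x - Δt * ((σ ^ 2 / 2) * (B1 + B2) + Dq) with hXdef
  have hdecomp : X = (Sg - Sφ) / 4 + (Sφ - (4 * φ z + 2 * Δt * σ ^ 2 * (A1 + A2))) / 4
      + (φ z - φ x - Δt * Dq) + (Δt * σ ^ 2 / 2) * ((A1 - B1) + (A2 - B2)) := by
    rw [hXdef]; ring
  have hX : |X| ≤ C₁ * h ^ 2 + B * Δt ^ 2 := by
    rw [hdecomp]
    have step : |(Sg - Sφ) / 4 + (Sφ - (4 * φ z + 2 * Δt * σ ^ 2 * (A1 + A2))) / 4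
        + (φ z - φ x - Δt * Dq) + (Δt * σ ^ 2 / 2) * ((A1 - B1) + (A2 - B2))|
        ≤ |(Sg - Sφ)| / 4 + |Sφ - (4 * φ z + 2 * Δt * σ ^ 2 * (A1 + A2))| / 4
          + |φ z - φ x - Δt * Dq| + (Δt * σ ^ 2 / 2) * (|A1 - B1| + |A2 - B2|) := by
      calc |(Sg - Sφ) / 4 + (Sφ - (4 * φ z + 2 * Δt * σ ^ 2 * (A1 + A2))) / 4
            + (φ z - φ x - Δt * Dq) + (Δt * σ ^ 2 / 2) * ((A1 - B1) + (A2 - B2))|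
          ≤ |(Sg - Sφ) / 4 + (Sφ - (4 * φ z + 2 * Δt * σ ^ 2 * (A1 + A2))) / 4
            + (φ z - φ x - Δt * Dq)| + |(Δt * σ ^ 2 / 2) * ((A1 - B1) + (A2 - B2))| := abs_add_le _ _
        _ ≤ (|(Sg - Sφ) / 4 + (Sφ - (4 * φ z + 2 * Δt * σ ^ 2 * (A1 + A2))) / 4|
            + |φ z - φ x - Δt * Dq|) + |(Δt * σ ^ 2 / 2) * ((A1 - B1) + (A2 - B2))| :=
            add_le_add_left (abs_add_le _ _) _
        _ ≤ ((|(Sg - Sφ) / 4| + |(Sφ - (4 * φ z + 2 * Δt * σ ^ 2 * (A1 + A2))) / 4|)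
            + |φ z - φ x - Δt * Dq|) + |(Δt * σ ^ 2 / 2) * ((A1 - B1) + (A2 - B2))| := by
            apply add_le_add_left; apply add_le_add_left; exact abs_add_le _ _
        _ = |(Sg - Sφ)| / 4 + |Sφ - (4 * φ z + 2 * Δt * σ ^ 2 * (A1 + A2))| / 4
            + |φ z - φ x - Δt * Dq| + (Δt * σ ^ 2 / 2) * |(A1 - B1) + (A2 - B2)| := by
            rw [abs_mul, abs_div, abs_div]
            rw [abs_of_pos (by positivity : (0:ℝ) < Δt * σ ^ 2 / 2)]
            norm_num
        _ ≤ |(Sg - Sφ)| / 4 + |Sφ - (4 * φ z + 2 * Δt * σ ^ 2 * (A1 + A2))| / 4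
            + |φ z - φ x - Δt * Dq| + (Δt * σ ^ 2 / 2) * (|A1 - B1| + |A2 - B2|) := by
            apply add_le_add_right
            exact mul_le_mul_of_nonneg_left (abs_add_le _ _) (by positivity)
    refine step.trans ?_
    have e1 : |Sg - Sφ| / 4 ≤ C₁ * h ^ 2 := by linarith
    have e2 : |Sφ - (4 * φ z + 2 * Δt * σ ^ 2 * (A1 + A2))| / 4 ≤ E := by linarith
    have e4 : (Δt * σ ^ 2 / 2) * (|A1 - B1| + |A2 - B2|) ≤ Δt * σ ^ 2 * (K * (Δt * R)) := by
      have : |A1 - B1| + |A2 - B2| ≤ 2 * (K * (Δt * R)) := by linarith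
      calc (Δt * σ ^ 2 / 2) * (|A1 - B1| + |A2 - B2|)
          ≤ (Δt * σ ^ 2 / 2) * (2 * (K * (Δt * R))) :=
            mul_le_mul_of_nonneg_left this (by positivity)
        _ = Δt * σ ^ 2 * (K * (Δt * R)) := by ring
    have : C₁ * h ^ 2 + E + (K * R ^ 2 * Δt ^ 2) + Δt * σ ^ 2 * (K * (Δt * R))
        = C₁ * h ^ 2 + B * Δt ^ 2 := by
      rw [hEdef, hBdef]; ring
    linarith
  -- conclude
  have hgoal : (1 / Δt) * |X| ≤ C * (Δt + h ^ 2 / Δt) := by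
    have h1 : (1 / Δt) * |X| ≤ (1 / Δt) * (C₁ * h ^ 2 + B * Δt ^ 2) :=
      mul_le_mul_of_nonneg_left hX (by positivity)
    have h2 : (1 / Δt) * (C₁ * h ^ 2 + B * Δt ^ 2) ≤ C * (Δt + h ^ 2 / Δt) := by
      rw [hCdef]
      have key : C₁ * h ^ 2 + B * Δt ^ 2 ≤ (C₁ + B + 1) * (Δt * Δt + h ^ 2) := by
        have e : (C₁ + B + 1) * (Δt * Δt + h ^ 2) - (C₁ * h ^ 2 + B * Δt ^ 2)
            = C₁ * (Δt * Δt) + B * (h * h) + Δt * Δt + h * h := by ring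
        have n1 : 0 ≤ C₁ * (Δt * Δt) := mul_nonneg hC₁.le (mul_nonneg hΔt.le hΔt.le)
        have n2 : 0 ≤ B * (h * h) := mul_nonneg hB.le (mul_nonneg hh.le hh.le)
        have n3 : 0 ≤ Δt * Δt := mul_nonneg hΔt.le hΔt.le
        have n4 : 0 ≤ h * h := mul_nonneg hh.le hh.le
        linarith
      calc 1 / Δt * (C₁ * h ^ 2 + B * Δt ^ 2)
          ≤ 1 / Δt * ((C₁ + B + 1) * (Δt * Δt + h ^ 2)) :=
            mul_le_mul_of_nonneg_left key (by positivity)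
        _ = (C₁ + B + 1) * (Δt + h ^ 2 / Δt) := by field_simp
    exact h1.trans h2
  exact hgoal
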